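/- arXiv:0810.5143 — 3 statements merged into one kernel-verified Lean document; each statement's English description precedes it below -/
import Mathlib

section
/- For all r > 0: g''(r) + g'(r)/r + ( r^{2α} V₀ e^{U(r)} − 1/r² ) g(r) = − r^{2α+1} e^{U(r)}. Moreover g(r) → 0 as r → 0⁺, g(r) → 0 as r → ∞, and there is a constant C depending only on α and V₀ with |g(r)| ≤ C r/(1+r²) for all r > 0. -/
open MeasureTheory Metric Real Filter
open scoped RealInnerProductSpace Topology

noncomputable section

/-- `ℝ²`, realized as the Euclidean space on `Fin 2`. -/
abbrev R2 : Type := EuclideanSpace ℝ (Fin 2)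

/-- The Laplacian of `u : ℝ² → ℝ` at `x`. -/
def lap (u : R2 → ℝ) (x : R2) : ℝ :=
  ∑ j : Fin 2, fderiv ℝ (fun y => fderiv ℝ u y (EuclideanSpace.single j 1)) x
    (EuclideanSpace.single j 1)

/-- `a = V₀/(8(1+α)²)`. -/
def aconst (α V0 : ℝ) : ℝ := V0 / (8 * (1 + α) ^ 2)

/-- `U(r) = -2 log(1 + a r^{2α+2})`. -/
def U1 (α V0 r : ℝ) : ℝ := -2 * Real.log (1 + aconst α V0 * r ^ (2 * α + 2))

/-- `g(r) = -(2(1+α)/(α V₀)) r/(1 + a r^{2α+2})`. -/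
def g1 (α V0 r : ℝ) : ℝ :=
  -(2 * (1 + α) / (α * V0)) * r / (1 + aconst α V0 * r ^ (2 * α + 2))

namespace GAux

/-- explicit first derivative of `g1` -/
def Gp (α V0 r : ℝ) : ℝ :=
  (-(2 * (1 + α) / (α * V0)) * (1 + aconst α V0 * r ^ (2 * α + 2))
      - -(2 * (1 + α) / (α * V0)) * r * (aconst α V0 * ((2 * α + 2) * r ^ (2 * α + 1))))
    / (1 + aconst α V0 * r ^ (2 * α + 2)) ^ 2

lemma aconst_pos {α V0 : ℝ} (hα : 0 < α) (hV0 : 0 < V0) : 0 < aconst α V0 := by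
  have h8 : (0:ℝ) < 8 * (1 + α) ^ 2 := by nlinarith
  exact div_pos hV0 h8

lemma Dpos {α V0 : ℝ} (hα : 0 < α) (hV0 : 0 < V0) {r : ℝ} (hr : 0 ≤ r) :
    0 < 1 + aconst α V0 * r ^ (2 * α + 2) := by
  have h1 : 0 ≤ r ^ (2 * α + 2) := Real.rpow_nonneg hr _
  nlinarith [mul_nonneg (aconst_pos hα hV0).le h1]

lemma hasDerivAt_D {α V0 : ℝ} {r : ℝ} (hr : 0 < r) :
    HasDerivAt (fun x : ℝ => 1 + aconst α V0 * x ^ (2 * α + 2))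
      (aconst α V0 * ((2 * α + 2) * r ^ (2 * α + 1))) r := by
  have h := (Real.hasDerivAt_rpow_const (x := r) (p := 2 * α + 2)
      (Or.inl hr.ne')).const_mul (aconst α V0)
  have h2 : 2 * α + 2 - 1 = 2 * α + 1 := by ring
  rw [h2] at h
  exact h.const_add 1

lemma hasDerivAt_g1 {α V0 : ℝ} (hα : 0 < α) (hV0 : 0 < V0) {r : ℝ} (hr : 0 < r) :
    HasDerivAt (g1 α V0) (Gp α V0 r) r := by
  have hu : HasDerivAt (fun x : ℝ => -(2 * (1 + α) / (α * V0)) * x)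
      (-(2 * (1 + α) / (α * V0))) r := by
    simpa using (hasDerivAt_id r).const_mul (-(2 * (1 + α) / (α * V0)))
  have hD := hasDerivAt_D (α := α) (V0 := V0) hr
  have hne : (1 + aconst α V0 * r ^ (2 * α + 2)) ≠ 0 := (Dpos hα hV0 hr.le).ne'
  exact hu.div hD hne

lemma hasDerivAt_Gp {α V0 : ℝ} (hα : 0 < α) (hV0 : 0 < V0) {r : ℝ} (hr : 0 < r) :
    HasDerivAt (Gp α V0)
      (((-(2 * (1 + α) / (α * V0)) * (aconst α V0 * ((2 * α + 2) * r ^ (2 * α + 1)))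
          - (-(2 * (1 + α) / (α * V0)) * (aconst α V0 * ((2 * α + 2) * r ^ (2 * α + 1)))
            + -(2 * (1 + α) / (α * V0)) * r
              * (aconst α V0 * ((2 * α + 2) * ((2 * α + 1) * r ^ (2 * α))))))
          * (1 + aconst α V0 * r ^ (2 * α + 2)) ^ 2
        - (-(2 * (1 + α) / (α * V0)) * (1 + aconst α V0 * r ^ (2 * α + 2))
            - -(2 * (1 + α) / (α * V0)) * r * (aconst α V0 * ((2 * α + 2) * r ^ (2 * α + 1))))
          * ((2 : ℕ) * (1 + aconst α V0 * r ^ (2 * α + 2)) ^ (2 - 1)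
              * (aconst α V0 * ((2 * α + 2) * r ^ (2 * α + 1)))))
        / ((1 + aconst α V0 * r ^ (2 * α + 2)) ^ 2) ^ 2) r := by
  have hD := hasDerivAt_D (α := α) (V0 := V0) hr
  have hne : (1 + aconst α V0 * r ^ (2 * α + 2)) ≠ 0 := (Dpos hα hV0 hr.le).ne'
  have hu : HasDerivAt (fun x : ℝ => -(2 * (1 + α) / (α * V0)) * x)
      (-(2 * (1 + α) / (α * V0))) r := by
    simpa using (hasDerivAt_id r).const_mul (-(2 * (1 + α) / (α * V0)))
  have hv : HasDerivAt (fun x : ℝ => aconst α V0 * ((2 * α + 2) * x ^ (2 * α + 1)))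
      (aconst α V0 * ((2 * α + 2) * ((2 * α + 1) * r ^ (2 * α)))) r := by
    have h := ((Real.hasDerivAt_rpow_const (x := r) (p := 2 * α + 1)
        (Or.inl hr.ne')).const_mul (2 * α + 2)).const_mul (aconst α V0)
    have h2 : 2 * α + 1 - 1 = 2 * α := by ring
    rw [h2] at h
    exact h
  have ht1 : HasDerivAt (fun x : ℝ => -(2 * (1 + α) / (α * V0)) * (1 + aconst α V0 * x ^ (2 * α + 2)))
      (-(2 * (1 + α) / (α * V0)) * (aconst α V0 * ((2 * α + 2) * r ^ (2 * α + 1)))) r :=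
    hD.const_mul _
  have ht2 := hu.mul hv
  have hN := ht1.sub ht2
  have hD2 := hD.pow 2
  have hD2ne : (1 + aconst α V0 * r ^ (2 * α + 2)) ^ 2 ≠ 0 := pow_ne_zero _ hne
  exact hN.div hD2 hD2ne

end GAux

set_option maxHeartbeats 4000000 in
/-- Equation (2.7)–(2.8): `g` solves the inhomogeneous linearized radial ODE,
vanishes at `0` and at `∞`, and satisfies `|g(r)| ≤ C r/(1+r²)`. -/
theorem g_solves_radial_ODE (α V0 : ℝ) (hα : 0 < α) (hV0 : 0 < V0) :
    (∀ r > (0 : ℝ), deriv (deriv (g1 α V0)) r + deriv (g1 α V0) r / r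
        + (r ^ (2 * α) * V0 * Real.exp (U1 α V0 r) - 1 / r ^ 2) * g1 α V0 r
        = -(r ^ (2 * α + 1) * Real.exp (U1 α V0 r)))
    ∧ Tendsto (g1 α V0) (𝓝[>] 0) (𝓝 0)
    ∧ Tendsto (g1 α V0) atTop (𝓝 0)
    ∧ ∃ C : ℝ, ∀ r > (0 : ℝ), |g1 α V0 r| ≤ C * r / (1 + r ^ 2) := by
  have ha : 0 < aconst α V0 := GAux.aconst_pos hα hV0
  have h1α : (0:ℝ) < 1 + α := by linarith
  refine ⟨?_, ?_, ?_, ?_⟩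
  · -- the ODE
    intro r hr
    have hDpos := GAux.Dpos hα hV0 (α := α) (V0 := V0) hr.le
    have hDne : (1 + aconst α V0 * r ^ (2 * α + 2)) ≠ 0 := hDpos.ne'
    have e1 : deriv (g1 α V0) r = GAux.Gp α V0 r := (GAux.hasDerivAt_g1 hα hV0 hr).deriv
    have hEv : deriv (g1 α V0) =ᶠ[𝓝 r] GAux.Gp α V0 := by
      filter_upwards [Ioi_mem_nhds hr] with x hx
      exact (GAux.hasDerivAt_g1 hα hV0 hx).deriv
    have e2 := hEv.deriv_eq.trans (GAux.hasDerivAt_Gp hα hV0 hr).deriv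
    have eU : Real.exp (U1 α V0 r)
        = ((1 + aconst α V0 * r ^ (2 * α + 2)) ^ 2)⁻¹ := by
      unfold U1
      rw [show (-2 : ℝ) * Real.log (1 + aconst α V0 * r ^ (2 * α + 2))
          = Real.log (1 + aconst α V0 * r ^ (2 * α + 2)) * (-2 : ℝ) by ring,
        ← Real.rpow_def_of_pos hDpos,
        show (-2 : ℝ) = -((2:ℕ):ℝ) by norm_num,
        Real.rpow_neg hDpos.le, Real.rpow_natCast]
    have h21 : r ^ (2 * α + 1) = r ^ (2 * α) * r := by
      rw [Real.rpow_add hr, Real.rpow_one]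
    have h22 : r ^ (2 * α + 2) = r ^ (2 * α) * r ^ 2 := by
      rw [Real.rpow_add hr, show ((2:ℝ) = ((2:ℕ):ℝ)) by norm_num, Real.rpow_natCast]
    rw [e1, e2, eU]
    unfold GAux.Gp g1
    rw [h21, h22]
    set s := r ^ (2 * α) with hs_def
    have hs : 0 < s := Real.rpow_pos_of_pos hr _
    set a := aconst α V0 with ha_def
    have haen : a ≠ 0 := ha.ne'
    have hV : V0 = 8 * (1 + α) ^ 2 * a := by
      rw [ha_def]; unfold aconst; field_simp
    have hden : (0:ℝ) < 1 + a * (s * r ^ 2) := by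
      rw [← h22]; exact hDpos
    rw [hV]
    field_simp [hr.ne', hα.ne', h1α.ne', haen, hden.ne']
    ring
  · -- limit at 0+
    have hrc : ContinuousAt (fun x : ℝ => x ^ (2 * α + 2)) 0 :=
      Real.continuousAt_rpow_const 0 (2 * α + 2) (Or.inr (by linarith))
    have hden0 : (1 + aconst α V0 * (0:ℝ) ^ (2 * α + 2)) ≠ 0 := by
      rw [Real.zero_rpow (by positivity)]
      norm_num
    have hc : ContinuousAt (g1 α V0) 0 := by
      unfold g1
      exact ((continuousAt_const.mul continuousAt_id).div
        (continuousAt_const.add (continuousAt_const.mul hrc)) hden0)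
    have h0 : g1 α V0 0 = 0 := by
      simp [g1]
    have h2 : Tendsto (g1 α V0) (𝓝 0) (𝓝 0) := by
      simpa only [h0] using hc.tendsto
    exact h2.mono_left nhdsWithin_le_nhds
  · -- limit at ∞
    have hKpos : 0 < 2 * (1 + α) / (α * V0) := by positivity
    set K := 2 * (1 + α) / (α * V0) with hK
    have hlim : Tendsto (fun x : ℝ => K / aconst α V0 * x ^ (-(2 * α + 1))) atTop (𝓝 0) := by
      have := (tendsto_rpow_neg_atTop (y := 2 * α + 1) (by linarith)).const_mul
        (K / aconst α V0)
      simpa using this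
    apply squeeze_zero_norm' _ hlim
    filter_upwards [eventually_gt_atTop 0] with x hx
    have hDpos := GAux.Dpos hα hV0 (α := α) (V0 := V0) hx.le
    have hxp : 0 < x ^ (2 * α + 2) := Real.rpow_pos_of_pos hx _
    have habs : ‖g1 α V0 x‖ = K * x / (1 + aconst α V0 * x ^ (2 * α + 2)) := by
      rw [Real.norm_eq_abs, g1, abs_div, abs_of_pos hDpos, abs_of_nonpos (by nlinarith), ← hK]
      ring
    rw [habs]
    have hstep : K * x / (1 + aconst α V0 * x ^ (2 * α + 2))
        ≤ K * x / (aconst α V0 * x ^ (2 * α + 2)) := by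
      apply div_le_div_of_nonneg_left (by positivity) (by positivity)
      nlinarith [mul_pos ha hxp]
    refine hstep.trans (le_of_eq ?_)
    rw [show -(2 * α + 1) = (1:ℝ) - (2 * α + 2) by ring, Real.rpow_sub hx, Real.rpow_one]
    field_simp
  · -- the uniform bound
    set K := 2 * (1 + α) / (α * V0) with hK
    have hKpos : 0 < K := by rw [hK]; positivity
    refine ⟨K * (2 + 2 / aconst α V0), fun r hr => ?_⟩
    have hDpos := GAux.Dpos hα hV0 (α := α) (V0 := V0) hr.le
    have hrp : 0 ≤ r ^ (2 * α + 2) := Real.rpow_nonneg hr.le _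
    have habs : |g1 α V0 r| = K * r / (1 + aconst α V0 * r ^ (2 * α + 2)) := by
      rw [g1, abs_div, abs_of_pos hDpos, abs_of_nonpos (by nlinarith), ← hK]
      ring
    rw [habs]
    have hr2 : (0:ℝ) < 1 + r ^ 2 := by positivity
    rw [div_le_div_iff₀ hDpos hr2]
    have hkey : 1 + r ^ 2 ≤ (2 + 2 / aconst α V0) * (1 + aconst α V0 * r ^ (2 * α + 2)) := by
      rcases le_total r 1 with h1 | h1
      · have : r ^ 2 ≤ 1 := by nlinarith
        have h2a : (0:ℝ) < 2 / aconst α V0 := by positivity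
        nlinarith [mul_nonneg ha.le hrp]
      · have hrr : r ^ 2 ≤ r ^ (2 * α + 2) := by
          rw [show r ^ 2 = r ^ ((2:ℕ):ℝ) by rw [Real.rpow_natCast]]
          apply Real.rpow_le_rpow_of_exponent_le h1
          push_cast; linarith
        have h2a : (2 / aconst α V0) * (aconst α V0 * r ^ (2 * α + 2)) = 2 * r ^ (2 * α + 2) := by
          field_simp
        nlinarith [mul_nonneg ha.le hrp, mul_nonneg (by positivity : (0:ℝ) ≤ 2 / aconst α V0) (mul_nonneg ha.le hrp)]
    calc K * r * (1 + r ^ 2) ≤ K * r * ((2 + 2 / aconst α V0) * (1 + aconst α V0 * r ^ (2 * α + 2))) := by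
          apply mul_le_mul_of_nonneg_left hkey (by positivity)
      _ = K * (2 + 2 / aconst α V0) * r * (1 + aconst α V0 * r ^ (2 * α + 2)) := by ring
end
end

section
/- For every vector b ∈ ℝ², the function φ(y) = g(|y|) (b·y)/|y| satisfies Δφ(y) + |y|^{2α} V₀ e^{U(|y|)} φ(y) = −(b·y) |y|^{2α} e^{U(|y|)} for all y ∈ ℝ² \ {0}, where Δ is the Laplacian on ℝ². -/
open MeasureTheory Metric Real Filter
open scoped RealInnerProductSpace Topology

noncomputable section

/- ### Auxiliary scalar functions and lemmas -/

/-- The constant `C = -2(1+α)/(αV₀)`. -/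
def Cc (α V0 : ℝ) : ℝ := -(2 * (1 + α) / (α * V0))

/-- `D(s) = 1 + a s^{α+1}`. -/
def DD (α V0 s : ℝ) : ℝ := 1 + aconst α V0 * s ^ (α + 1)

/-- `G(s) = C / D(s)`, so that `φ(y) = ⟪b,y⟫ G(‖y‖²)`. -/
def G (α V0 s : ℝ) : ℝ := Cc α V0 / DD α V0 s

/-- The derivative of `G`. -/
def G₁ (α V0 s : ℝ) : ℝ := -(Cc α V0 * aconst α V0 * (α + 1)) * s ^ α / (DD α V0 s) ^ 2

/-- The second derivative of `G`. -/
def G₂ (α V0 s : ℝ) : ℝ :=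
  ((-(Cc α V0 * aconst α V0 * (α + 1)) * (α * s ^ (α - 1))) * (DD α V0 s) ^ 2
    - (-(Cc α V0 * aconst α V0 * (α + 1)) * s ^ α) *
        (2 * DD α V0 s ^ 1 * (aconst α V0 * ((α + 1) * s ^ (α + 1 - 1)))))
    / ((DD α V0 s) ^ 2) ^ 2

variable {α V0 : ℝ}

lemma apos (hα : 0 < α) (hV0 : 0 < V0) : 0 < aconst α V0 := by
  have : (0:ℝ) < 1 + α := by linarith
  unfold aconst; positivity

lemma DDpos (hα : 0 < α) (hV0 : 0 < V0) {s : ℝ} (hs : 0 < s) : 0 < DD α V0 s := by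
  have h1 := apos hα hV0 (V0 := V0)
  have h2 : 0 < s ^ (α + 1) := Real.rpow_pos_of_pos hs _
  unfold DD; nlinarith

lemma hasDerivAt_DD {s : ℝ} (hs : (0:ℝ) < s) :
    HasDerivAt (DD α V0) (aconst α V0 * ((α + 1) * s ^ (α + 1 - 1))) s := by
  have h := ((Real.hasDerivAt_rpow_const (x := s) (p := α + 1)
    (Or.inl hs.ne')).const_mul (aconst α V0)).const_add 1
  exact h

lemma hasDerivAt_G (hα : 0 < α) (hV0 : 0 < V0) {s : ℝ} (hs : 0 < s) :
    HasDerivAt (G α V0) (G₁ α V0 s) s := by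
  have hD := hasDerivAt_DD (α := α) (V0 := V0) hs
  have h := (hasDerivAt_const s (Cc α V0)).div hD (DDpos hα hV0 hs).ne'
  refine h.congr_deriv ?_
  unfold G₁
  rw [show α + 1 - 1 = α by ring]
  ring

lemma hasDerivAt_G₁ (hα : 0 < α) (hV0 : 0 < V0) {s : ℝ} (hs : 0 < s) :
    HasDerivAt (G₁ α V0) (G₂ α V0 s) s := by
  have hD := hasDerivAt_DD (α := α) (V0 := V0) hs
  have hnum : HasDerivAt (fun x => -(Cc α V0 * aconst α V0 * (α + 1)) * x ^ α)
      (-(Cc α V0 * aconst α V0 * (α + 1)) * (α * s ^ (α - 1))) s :=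
    (Real.hasDerivAt_rpow_const (x := s) (p := α) (Or.inl hs.ne')).const_mul _
  have hden : HasDerivAt (fun x => (DD α V0 x) ^ 2)
      (2 * DD α V0 s ^ 1 * (aconst α V0 * ((α + 1) * s ^ (α + 1 - 1)))) s := hD.pow 2
  have hden0 : (DD α V0 s) ^ 2 ≠ 0 := pow_ne_zero 2 (DDpos hα hV0 hs).ne'
  exact hnum.div hden hden0

/-- The key ODE identity satisfied by `G`. -/
lemma key (hα : 0 < α) (hV0 : 0 < V0) {s : ℝ} (hs : 0 < s) :
    8 * G₁ α V0 s + 4 * s * G₂ α V0 s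
      + s ^ α * V0 * (1 / (DD α V0 s) ^ 2) * G α V0 s
      = -(s ^ α * (1 / (DD α V0 s) ^ 2)) := by
  have h1α : (0:ℝ) < 1 + α := by linarith
  have hq : s ^ (α + 1) = s ^ α * s := Real.rpow_add_one hs.ne' α
  have hq' : s ^ (α + 1 - 1) = s ^ α := by rw [show α + 1 - 1 = α by ring]
  have hm : s ^ (α - 1) = s ^ α / s := by
    rw [show α - 1 = α + (-1) by ring, Real.rpow_add hs, Real.rpow_neg_one, div_eq_mul_inv]
  have hDpos := DDpos hα hV0 (V0 := V0) hs
  have hD0 : DD α V0 s ≠ 0 := hDpos.ne'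
  unfold G₁ G₂ G
  rw [hq', hm]
  unfold DD at hD0 ⊢
  rw [hq] at hD0 ⊢
  unfold aconst at hD0 ⊢
  unfold Cc
  field_simp
  ring

/-- Laplacian of `y ↦ ⟪b,y⟫ G(‖y‖²)` for a radial `C²` profile `G`. -/
lemma lap_formula (b : R2) (G G₁ G₂ : ℝ → ℝ)
    (hG : ∀ s : ℝ, 0 < s → HasDerivAt G (G₁ s) s)
    (hG₁ : ∀ s : ℝ, 0 < s → HasDerivAt G₁ (G₂ s) s)
    (y : R2) (hy : y ≠ 0) :
    lap (fun w => ⟪b, w⟫ * G (‖w‖ ^ 2)) y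
      = 8 * ⟪b, y⟫ * G₁ (‖y‖ ^ 2) + 4 * ‖y‖ ^ 2 * ⟪b, y⟫ * G₂ (‖y‖ ^ 2) := by
  have hN : ∀ z : R2, HasFDerivAt (fun w : R2 => ‖w‖ ^ 2) (2 • (innerSL ℝ z)) z :=
    fun z => (hasStrictFDerivAt_norm_sq z).hasFDerivAt
  have hsq : ∀ z : R2, z ≠ 0 → (0:ℝ) < ‖z‖ ^ 2 := fun z hz => by
    have := norm_pos_iff.mpr hz; positivity
  have hu : ∀ z : R2, z ≠ 0 → HasFDerivAt (fun w : R2 => ⟪b, w⟫ * G (‖w‖ ^ 2))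
      (⟪b, z⟫ • (G₁ (‖z‖ ^ 2) • (2 • (innerSL ℝ z))) + G (‖z‖ ^ 2) • (innerSL ℝ b)) z :=
    fun z hz => ((innerSL ℝ b).hasFDerivAt).mul
      ((hG _ (hsq z hz)).comp_hasFDerivAt z (hN z))
  have hfd : ∀ (j : Fin 2) (z : R2), z ≠ 0 →
      fderiv ℝ (fun w : R2 => ⟪b, w⟫ * G (‖w‖ ^ 2)) z (EuclideanSpace.single j 1)
        = ⟪b, z⟫ * (G₁ (‖z‖ ^ 2) * (2 * z j)) + G (‖z‖ ^ 2) * b j := by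
    intro j z hz
    rw [(hu z hz).fderiv]
    fin_cases j <;>
      simp [EuclideanSpace.inner_single_right, EuclideanSpace.inner_single_left]
  have hsy := hsq y hy
  have hsnd : ∀ j : Fin 2,
      fderiv ℝ (fun z : R2 =>
          ⟪b, z⟫ * (G₁ (‖z‖ ^ 2) * (2 * z j)) + G (‖z‖ ^ 2) * b j) y
        (EuclideanSpace.single j 1)
      = 4 * b j * y j * G₁ (‖y‖ ^ 2) + 4 * ⟪b, y⟫ * (y j) ^ 2 * G₂ (‖y‖ ^ 2)
          + 2 * ⟪b, y⟫ * G₁ (‖y‖ ^ 2) := by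
    intro j
    have hprojj : HasFDerivAt (fun z : R2 => z j)
        (EuclideanSpace.proj j : R2 →L[ℝ] ℝ) y :=
      (EuclideanSpace.proj j : R2 →L[ℝ] ℝ).hasFDerivAt
    have h1 : HasFDerivAt (fun z : R2 =>
          ⟪b, z⟫ * (G₁ (‖z‖ ^ 2) * (2 * z j)) + G (‖z‖ ^ 2) * b j)
        ((⟪b, y⟫ • ((G₁ (‖y‖ ^ 2)) • ((2:ℝ) • (EuclideanSpace.proj j : R2 →L[ℝ] ℝ))
              + (2 * y j) • ((G₂ (‖y‖ ^ 2)) • (2 • (innerSL ℝ y))))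
            + (G₁ (‖y‖ ^ 2) * (2 * y j)) • (innerSL ℝ b))
          + (b j) • ((G₁ (‖y‖ ^ 2)) • (2 • (innerSL ℝ y)))) y := by
      exact (((innerSL ℝ b).hasFDerivAt).mul
          ((((hG₁ _ hsy).comp_hasFDerivAt y (hN y))).mul (hprojj.const_mul 2))).add
        ((((hG _ hsy).comp_hasFDerivAt y (hN y))).mul_const (b j))
    rw [h1.fderiv]
    fin_cases j <;>
      simp [EuclideanSpace.inner_single_right, EuclideanSpace.inner_single_left,
        EuclideanSpace.single_apply] <;> ring
  unfold lap
  have hEq : ∀ j : Fin 2,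
      fderiv ℝ (fun z => fderiv ℝ (fun w : R2 => ⟪b, w⟫ * G (‖w‖ ^ 2)) z
          (EuclideanSpace.single j 1)) y (EuclideanSpace.single j 1)
      = 4 * b j * y j * G₁ (‖y‖ ^ 2) + 4 * ⟪b, y⟫ * (y j) ^ 2 * G₂ (‖y‖ ^ 2)
          + 2 * ⟪b, y⟫ * G₁ (‖y‖ ^ 2) := by
    intro j
    have hev : (fun z => fderiv ℝ (fun w : R2 => ⟪b, w⟫ * G (‖w‖ ^ 2)) z
          (EuclideanSpace.single j 1))
        =ᶠ[𝓝 y] (fun z : R2 =>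
          ⟪b, z⟫ * (G₁ (‖z‖ ^ 2) * (2 * z j)) + G (‖z‖ ^ 2) * b j) := by
      filter_upwards [compl_singleton_mem_nhds hy] with z hz
      exact hfd j z hz
    rw [hev.fderiv_eq]
    exact hsnd j
  rw [Fin.sum_univ_two, hEq 0, hEq 1]
  have hip : ⟪b, y⟫ = b 0 * y 0 + b 1 * y 1 := by
    simp [PiLp.inner_apply, Fin.sum_univ_two]; ring
  have hnorm : ‖y‖ ^ 2 = y 0 ^ 2 + y 1 ^ 2 := by
    rw [← real_inner_self_eq_norm_sq]
    rw [real_inner_self_eq_norm_sq, EuclideanSpace.real_norm_sq_eq, Fin.sum_univ_two]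
  rw [hip, hnorm]
  ring

/-- Equation (2.10): `φ(y) = g(|y|)(b·y)/|y|` solves the linearized equation with
right-hand side `-(b·y)|y|^{2α} e^{U}`. -/
theorem phi_solves_linearized_equation (α V0 : ℝ) (hα : 0 < α) (hV0 : 0 < V0) (b : R2) :
    ∀ y : R2, y ≠ 0 →
      lap (fun w => g1 α V0 ‖w‖ * (⟪b, w⟫ / ‖w‖)) y
        + ‖y‖ ^ (2 * α) * V0 * Real.exp (U1 α V0 ‖y‖) *
            (g1 α V0 ‖y‖ * (⟪b, y⟫ / ‖y‖))
        = -(⟪b, y⟫ * ‖y‖ ^ (2 * α) * Real.exp (U1 α V0 ‖y‖)) := by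
  intro y hy
  have hy' : (0:ℝ) < ‖y‖ := norm_pos_iff.mpr hy
  have hs : (0:ℝ) < ‖y‖ ^ 2 := by positivity
  have hnorm_pow : ∀ w : R2, ‖w‖ ^ (2 * α + 2) = ((‖w‖:ℝ) ^ 2) ^ (α + 1) := by
    intro w
    rw [show (2 * α + 2 : ℝ) = 2 * (α + 1) by ring, Real.rpow_mul (norm_nonneg w),
      show ((2:ℝ)) = ((2:ℕ):ℝ) by norm_num, Real.rpow_natCast]
  have hfun : (fun w : R2 => g1 α V0 ‖w‖ * (⟪b, w⟫ / ‖w‖))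
      = fun w : R2 => ⟪b, w⟫ * G α V0 (‖w‖ ^ 2) := by
    funext w
    by_cases hw : w = 0
    · simp [hw]
    · have hw0 : (‖w‖:ℝ) ≠ 0 := norm_ne_zero_iff.mpr hw
      have hws : (0:ℝ) < ‖w‖ ^ 2 := by positivity
      have hD0 : DD α V0 (‖w‖ ^ 2) ≠ 0 := (DDpos hα hV0 hws).ne'
      have hg : g1 α V0 ‖w‖ = Cc α V0 * ‖w‖ / DD α V0 (‖w‖ ^ 2) := by
        unfold g1 Cc DD
        rw [hnorm_pow w]
      rw [hg]
      unfold G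
      field_simp
  rw [hfun]
  have hφ : g1 α V0 ‖y‖ * (⟪b, y⟫ / ‖y‖) = ⟪b, y⟫ * G α V0 (‖y‖ ^ 2) :=
    congrFun hfun y
  rw [hφ]
  rw [lap_formula b (G α V0) (G₁ α V0) (G₂ α V0)
    (fun s hs => hasDerivAt_G hα hV0 hs) (fun s hs => hasDerivAt_G₁ hα hV0 hs) y hy]
  have h2α : ‖y‖ ^ (2 * α) = ((‖y‖:ℝ) ^ 2) ^ α := by
    rw [Real.rpow_mul (norm_nonneg y), show ((2:ℝ)) = ((2:ℕ):ℝ) by norm_num,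
      Real.rpow_natCast]
  have hexp : Real.exp (U1 α V0 ‖y‖) = 1 / (DD α V0 (‖y‖ ^ 2)) ^ 2 := by
    have hDpos := DDpos hα hV0 (V0 := V0) hs
    unfold U1
    rw [hnorm_pow y]
    unfold DD at hDpos ⊢
    rw [show (-2:ℝ) * Real.log (1 + aconst α V0 * (‖y‖ ^ 2) ^ (α + 1))
        = -(Real.log (1 + aconst α V0 * (‖y‖ ^ 2) ^ (α + 1))
            + Real.log (1 + aconst α V0 * (‖y‖ ^ 2) ^ (α + 1))) by ring,
      Real.exp_neg, Real.exp_add, Real.exp_log hDpos, one_div]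
    congr 1
    ring
  rw [h2α, hexp]
  linear_combination ⟪b, y⟫ * key hα hV0 hs
end
end

section
/- Let δ₁ > 0 with δ₁ ≠ 1, and let f be a C² function on (0,∞) solving f''(s) + f'(s)/s + ( 8/(1+s²)² − δ₁²/s² ) f(s) = 0 for all s > 0. If there is a constant C with |f(s)| ≤ C s^{δ₁} for all s ∈ (0,1] and |f(s)| ≤ C s^{−δ₁} for all s ≥ 1, then f ≡ 0 on (0,∞). -/
open Real Filter Topology

noncomputable section

namespace DecayAux

noncomputable def Phi (d s : ℝ) : ℝ := s ^ d * ((d - 1) + 2 / (1 + s ^ 2))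

noncomputable def Phi' (d s : ℝ) : ℝ :=
  d * s ^ (d - 1) * ((d - 1) + 2 / (1 + s ^ 2)) - 4 * s ^ (d + 1) / (1 + s ^ 2) ^ 2

lemma hden {s : ℝ} : (1 : ℝ) + s ^ 2 ≠ 0 := by positivity

lemma hasDerivAt_inner {s : ℝ} (d : ℝ) :
    HasDerivAt (fun s : ℝ => (d - 1) + 2 / (1 + s ^ 2)) (-4 * s / (1 + s ^ 2) ^ 2) s := by
  have h1 : HasDerivAt (fun s : ℝ => 1 + s ^ 2) (2 * s) s := by
    simpa using ((hasDerivAt_pow 2 s).const_add 1)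
  have h2 := (hasDerivAt_const s (2 : ℝ)).fun_div h1 hden
  have h3 := h2.const_add (d - 1)
  refine h3.congr_deriv ?_
  field_simp; ring

lemma hasDerivAt_Phi {s : ℝ} (d : ℝ) (hs : 0 < s) : HasDerivAt (Phi d) (Phi' d s) s := by
  have h1 : HasDerivAt (fun s : ℝ => s ^ d) (d * s ^ (d - 1)) s :=
    Real.hasDerivAt_rpow_const (Or.inl hs.ne')
  have h := h1.fun_mul (hasDerivAt_inner d)
  refine h.congr_deriv ?_
  have e1 : s ^ (d + 1) = s ^ d * s := Real.rpow_add_one hs.ne' d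
  unfold Phi'
  rw [e1]
  field_simp
  ring

lemma hasDerivAt_Phi' {s : ℝ} (d : ℝ) (hs : 0 < s) :
    HasDerivAt (Phi' d)
      (-(Phi' d s) / s - (8 / (1 + s ^ 2) ^ 2 - d ^ 2 / s ^ 2) * Phi d s) s := by
  have h1 : HasDerivAt (fun s : ℝ => s ^ (d - 1)) ((d - 1) * s ^ (d - 1 - 1)) s :=
    Real.hasDerivAt_rpow_const (Or.inl hs.ne')
  have hA : HasDerivAt (fun s : ℝ => d * s ^ (d - 1) * ((d - 1) + 2 / (1 + s ^ 2)))
      ((d * ((d - 1) * s ^ (d - 1 - 1))) * ((d - 1) + 2 / (1 + s ^ 2))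
        + (d * s ^ (d - 1)) * (-4 * s / (1 + s ^ 2) ^ 2)) s :=
    (h1.const_mul d).fun_mul (hasDerivAt_inner d)
  have h2 : HasDerivAt (fun s : ℝ => 4 * s ^ (d + 1)) (4 * ((d + 1) * s ^ (d + 1 - 1))) s :=
    (Real.hasDerivAt_rpow_const (Or.inl hs.ne')).const_mul 4
  have h3 : HasDerivAt (fun s : ℝ => (1 + s ^ 2) ^ 2) (2 * (1 + s ^ 2) * (2 * s)) s := by
    have hb : HasDerivAt (fun s : ℝ => 1 + s ^ 2) (2 * s) s := by
      simpa using ((hasDerivAt_pow 2 s).const_add 1)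
    simpa using (hb.fun_pow 2)
  have hB : HasDerivAt (fun s : ℝ => 4 * s ^ (d + 1) / (1 + s ^ 2) ^ 2)
      ((4 * ((d + 1) * s ^ (d + 1 - 1)) * (1 + s ^ 2) ^ 2
        - 4 * s ^ (d + 1) * (2 * (1 + s ^ 2) * (2 * s))) / ((1 + s ^ 2) ^ 2) ^ 2) s :=
    h2.fun_div h3 (pow_ne_zero 2 hden)
  have h := hA.fun_sub hB
  refine h.congr_deriv ?_
  have e0 : s ^ (d - 1 - 1) = s ^ (d - 2) := by rw [show d - 1 - 1 = d - 2 by ring]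
  have e1 : s ^ (d - 1) = s ^ (d - 2) * s := by
    rw [← Real.rpow_add_one hs.ne']; congr 1; ring
  have e2 : s ^ d = s ^ (d - 2) * s * s := by
    rw [← Real.rpow_add_one hs.ne', ← Real.rpow_add_one hs.ne']; congr 1; ring
  have e3 : s ^ (d + 1) = s ^ (d - 2) * s * s * s := by
    rw [← Real.rpow_add_one hs.ne', ← Real.rpow_add_one hs.ne',
      ← Real.rpow_add_one hs.ne']; congr 1; ring
  have e4 : s ^ (d + 1 - 1) = s ^ (d - 2) * s * s := by rw [← e2, show d + 1 - 1 = d by ring]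
  unfold Phi Phi'
  rw [e0, e1, e2, e3, e4]
  have hs' := hs.ne'
  field_simp
  ring

lemma wronskian_const (V u u' v v' : ℝ → ℝ)
    (hu : ∀ s : ℝ, 0 < s → HasDerivAt u (u' s) s)
    (hu' : ∀ s : ℝ, 0 < s → HasDerivAt u' (-(u' s) / s - V s * u s) s)
    (hv : ∀ s : ℝ, 0 < s → HasDerivAt v (v' s) s)
    (hv' : ∀ s : ℝ, 0 < s → HasDerivAt v' (-(v' s) / s - V s * v s) s) :
    ∀ x : ℝ, 0 < x → ∀ y : ℝ, 0 < y →
      x * (u' x * v x - u x * v' x) = y * (u' y * v y - u y * v' y) := by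
  set W : ℝ → ℝ := fun s => s * (u' s * v s - u s * v' s) with hW
  have hdW : ∀ s : ℝ, 0 < s → HasDerivAt W 0 s := by
    intro s hs
    have h := (hasDerivAt_id' s).fun_mul
      (((hu' s hs).fun_mul (hv s hs)).fun_sub ((hu s hs).fun_mul (hv' s hs)))
    refine h.congr_deriv ?_
    field_simp
    ring
  have main : ∀ x : ℝ, 0 < x → ∀ y : ℝ, 0 < y → x ≤ y → W x = W y := by
    intro x hx y hy hxy
    rcases eq_or_lt_of_le hxy with rfl | hlt
    · rfl
    · have hdiff : DifferentiableOn ℝ W (Set.Icc x y) := fun z hz =>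
        ((hdW z (lt_of_lt_of_le hx hz.1)).differentiableAt).differentiableWithinAt
      have hderiv : ∀ z ∈ Set.Ico x y, derivWithin W (Set.Icc x y) z = 0 := by
        intro z hz
        have hz0 : 0 < z := lt_of_lt_of_le hx hz.1
        exact ((hdW z hz0).hasDerivWithinAt).derivWithin
          ((uniqueDiffOn_Icc hlt) z ⟨hz.1, hz.2.le⟩)
      exact (constant_of_derivWithin_zero hdiff hderiv y ⟨hxy, le_refl y⟩).symm
  intro x hx y hy
  rcases le_total x y with h | h
  · exact main x hx y hy h
  · exact (main y hy x hx h).symm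

lemma Phi_one (d : ℝ) : Phi d 1 = d := by
  unfold Phi; rw [Real.one_rpow]; norm_num

lemma Phi'_one (d : ℝ) : Phi' d 1 = d ^ 2 - 1 := by
  unfold Phi'; rw [Real.one_rpow, Real.one_rpow]; norm_num; ring

end DecayAux

open DecayAux

/-- A solution of the linearized radial ODE decaying like `s^{δ₁}` at `0` and
`s^{-δ₁}` at `∞` must vanish (for `δ₁ ≠ 1`). -/
theorem decaying_solution_vanishes (δ₁ C : ℝ) (hδ₁ : 0 < δ₁) (hδ₁_ne : δ₁ ≠ 1)
    (f : ℝ → ℝ) (hreg : ContDiffOn ℝ 2 f (Set.Ioi 0))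
    (hODE : ∀ s > (0 : ℝ), deriv (deriv f) s + deriv f s / s
      + (8 / (1 + s ^ 2) ^ 2 - δ₁ ^ 2 / s ^ 2) * f s = 0)
    (hb0 : ∀ s : ℝ, 0 < s → s ≤ 1 → |f s| ≤ C * s ^ δ₁)
    (hbinf : ∀ s : ℝ, 1 ≤ s → |f s| ≤ C * s ^ (-δ₁)) :
    ∀ s > (0 : ℝ), f s = 0 := by
  set V : ℝ → ℝ := fun s => 8 / (1 + s ^ 2) ^ 2 - δ₁ ^ 2 / s ^ 2 with hV
  -- regularity of f
  have hreg' : DifferentiableOn ℝ f (Set.Ioi 0) ∧ ContDiffOn ℝ 1 (deriv f) (Set.Ioi 0) := by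
    have h := (contDiffOn_succ_iff_deriv_of_isOpen (n := 1) isOpen_Ioi).mp
      (by exact_mod_cast hreg)
    exact ⟨h.1, h.2.2⟩
  have hf : ∀ s : ℝ, 0 < s → HasDerivAt f (deriv f s) s := by
    intro s hs
    exact (hreg'.1.differentiableAt (isOpen_Ioi.mem_nhds hs)).hasDerivAt
  have hf' : ∀ s : ℝ, 0 < s → HasDerivAt (deriv f) (-(deriv f s) / s - V s * f s) s := by
    intro s hs
    have h1 : DifferentiableAt ℝ (deriv f) s :=
      (hreg'.2.differentiableOn one_ne_zero).differentiableAt (isOpen_Ioi.mem_nhds hs)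
    have h2 := h1.hasDerivAt
    have h3 : deriv (deriv f) s = -(deriv f s) / s - V s * f s := by
      have h := hODE s hs
      simp only [hV]
      rw [neg_div]
      linarith
    rwa [h3] at h2
  have hφ : ∀ s : ℝ, 0 < s → HasDerivAt (Phi δ₁) (Phi' δ₁ s) s := fun s hs =>
    hasDerivAt_Phi δ₁ hs
  have hφ' : ∀ s : ℝ, 0 < s → HasDerivAt (Phi' δ₁) (-(Phi' δ₁ s) / s - V s * Phi δ₁ s) s :=
    fun s hs => hasDerivAt_Phi' δ₁ hs
  have hψ : ∀ s : ℝ, 0 < s → HasDerivAt (Phi (-δ₁)) (Phi' (-δ₁) s) s := fun s hs =>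
    hasDerivAt_Phi (-δ₁) hs
  have hψ' : ∀ s : ℝ, 0 < s →
      HasDerivAt (Phi' (-δ₁)) (-(Phi' (-δ₁) s) / s - V s * Phi (-δ₁) s) s := by
    intro s hs
    have h := hasDerivAt_Phi' (-δ₁) hs
    rwa [show (-δ₁ : ℝ) ^ 2 = δ₁ ^ 2 by ring] at h
  -- the three constant Wronskians
  have W1 := wronskian_const V f (deriv f) (Phi δ₁) (Phi' δ₁) hf hf' hφ hφ'
  have W2 := wronskian_const V f (deriv f) (Phi (-δ₁)) (Phi' (-δ₁)) hf hf' hψ hψ'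
  have W3 := wronskian_const V (Phi (-δ₁)) (Phi' (-δ₁)) (Phi δ₁) (Phi' δ₁) hψ hψ' hφ hφ'
  set c1 : ℝ := 1 * (deriv f 1 * Phi δ₁ 1 - f 1 * Phi' δ₁ 1) with hc1
  set c2 : ℝ := 1 * (deriv f 1 * Phi (-δ₁) 1 - f 1 * Phi' (-δ₁) 1) with hc2
  have hw : (1 : ℝ) * (Phi' (-δ₁) 1 * Phi δ₁ 1 - Phi (-δ₁) 1 * Phi' δ₁ 1)
      = 2 * δ₁ * (δ₁ ^ 2 - 1) := by
    rw [Phi_one, Phi_one, Phi'_one, Phi'_one]; ring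
  set w : ℝ := 2 * δ₁ * (δ₁ ^ 2 - 1) with hwdef
  have hwne : w ≠ 0 := by
    have h1 : δ₁ - 1 ≠ 0 := sub_ne_zero.mpr hδ₁_ne
    have h2 : δ₁ + 1 ≠ 0 := by positivity
    have : δ₁ ^ 2 - 1 = (δ₁ - 1) * (δ₁ + 1) := by ring
    rw [hwdef, this]
    exact mul_ne_zero (mul_ne_zero two_ne_zero (ne_of_gt hδ₁)) (mul_ne_zero h1 h2)
  -- key pointwise identity
  have key : ∀ s : ℝ, 0 < s → c1 * Phi (-δ₁) s - c2 * Phi δ₁ s = f s * w := by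
    intro s hs
    have A := W1 s hs 1 one_pos
    have B := W2 s hs 1 one_pos
    have Cc := W3 s hs 1 one_pos
    rw [hw] at Cc
    rw [hc1, hc2, ← A, ← B, ← Cc]
    ring
  -- c1 = 0 via decay at 0
  have hsum : (0:ℝ) < δ₁ + δ₁ := by positivity
  have tends0 : Tendsto (fun s : ℝ => s ^ (δ₁ + δ₁)) (𝓝[>] 0) (𝓝 0) := by
    have hc := (Real.continuousAt_rpow_const 0 (δ₁ + δ₁) (Or.inr hsum.le)).tendsto
    rw [Real.zero_rpow hsum.ne'] at hc
    exact hc.mono_left nhdsWithin_le_nhds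
  have term1 : Tendsto (fun s : ℝ => s ^ δ₁ * (f s * w)) (𝓝[>] 0) (𝓝 0) := by
    apply squeeze_zero_norm' (a := fun s => (C * |w|) * s ^ (δ₁ + δ₁))
    · filter_upwards [Ioc_mem_nhdsGT_of_mem (Set.left_mem_Ico.mpr one_pos)] with s hs
      have hsp : (0:ℝ) < s ^ δ₁ := Real.rpow_pos_of_pos hs.1 δ₁
      have hb := hb0 s hs.1 hs.2
      calc ‖s ^ δ₁ * (f s * w)‖ = s ^ δ₁ * |f s| * |w| := by
            rw [Real.norm_eq_abs, abs_mul, abs_mul, abs_of_pos hsp]; ring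
        _ ≤ s ^ δ₁ * (C * s ^ δ₁) * |w| := by gcongr
        _ = (C * |w|) * s ^ (δ₁ + δ₁) := by rw [Real.rpow_add hs.1]; ring
    · simpa using tends0.const_mul (C * |w|)
  have term2 : Tendsto (fun s : ℝ => c2 * (s ^ δ₁ * Phi δ₁ s)) (𝓝[>] 0) (𝓝 0) := by
    have hinner : Tendsto (fun s : ℝ => (δ₁ - 1) + 2 / (1 + s ^ 2)) (𝓝[>] 0)
        (𝓝 (δ₁ + 1)) := by
      have hcont : Continuous (fun s : ℝ => (δ₁ - 1) + 2 / (1 + s ^ 2)) := by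
        apply continuous_const.add
        exact continuous_const.div (continuous_const.add (continuous_pow 2)) (fun x => hden)
      have := (hcont.tendsto 0).mono_left (nhdsWithin_le_nhds (s := Set.Ioi (0:ℝ)))
      norm_num at this
      convert this using 2
      ring
    have hm : Tendsto (fun s : ℝ => s ^ (δ₁ + δ₁) * ((δ₁ - 1) + 2 / (1 + s ^ 2)))
        (𝓝[>] 0) (𝓝 0) := by simpa using tends0.mul hinner
    have heq : ∀ᶠ s in 𝓝[>] (0:ℝ), s ^ (δ₁ + δ₁) * ((δ₁ - 1) + 2 / (1 + s ^ 2))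
        = s ^ δ₁ * Phi δ₁ s := by
      filter_upwards [self_mem_nhdsWithin] with s hs
      unfold Phi
      rw [Real.rpow_add hs]
      ring
    simpa using ((hm.congr' heq).const_mul c2)
  have hR : Tendsto (fun s : ℝ => s ^ δ₁ * (f s * w) + c2 * (s ^ δ₁ * Phi δ₁ s))
      (𝓝[>] 0) (𝓝 0) := by simpa using term1.add term2
  have hL : Tendsto (fun s : ℝ => c1 * ((-δ₁ - 1) + 2 / (1 + s ^ 2))) (𝓝[>] 0)
      (𝓝 (c1 * (1 - δ₁))) := by
    have hcont : Continuous (fun s : ℝ => c1 * ((-δ₁ - 1) + 2 / (1 + s ^ 2))) := by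
      apply continuous_const.mul
      apply continuous_const.add
      exact continuous_const.div (continuous_const.add (continuous_pow 2)) (fun x => hden)
    have := (hcont.tendsto 0).mono_left (nhdsWithin_le_nhds (s := Set.Ioi (0:ℝ)))
    norm_num at this
    convert this using 2
    ring
  have hEq : (fun s : ℝ => c1 * ((-δ₁ - 1) + 2 / (1 + s ^ 2)))
      =ᶠ[𝓝[>] (0:ℝ)] fun s => s ^ δ₁ * (f s * w) + c2 * (s ^ δ₁ * Phi δ₁ s) := by
    filter_upwards [self_mem_nhdsWithin] with s hs
    have hk := key s hs
    have hinv : s ^ δ₁ * s ^ (-δ₁) = 1 := by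
      rw [← Real.rpow_add hs]; simp
    have hψs : s ^ δ₁ * Phi (-δ₁) s = (-δ₁ - 1) + 2 / (1 + s ^ 2) := by
      unfold Phi
      rw [← mul_assoc, hinv]
      ring
    rw [← hψs]
    linear_combination (s ^ δ₁) * hk
  have hc1z : c1 = 0 := by
    have hu : c1 * (1 - δ₁) = 0 := tendsto_nhds_unique hL (hR.congr' hEq.symm)
    rcases mul_eq_zero.mp hu with h | h
    · exact h
    · exact absurd (by linarith [sub_eq_zero.mp h] : δ₁ = 1) hδ₁_ne
  -- c2 = 0 via decay at ∞
  have hatop : Tendsto (fun s : ℝ => 1 + s ^ 2) atTop atTop :=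
    tendsto_atTop_add_const_left _ 1 (tendsto_pow_atTop two_ne_zero)
  have h2inv : Tendsto (fun s : ℝ => 2 / (1 + s ^ 2)) atTop (𝓝 0) := by
    simpa [div_eq_mul_inv] using (hatop.inv_tendsto_atTop).const_mul 2
  have hL2 : Tendsto (fun s : ℝ => c2 * ((δ₁ - 1) + 2 / (1 + s ^ 2))) atTop
      (𝓝 (c2 * (δ₁ - 1))) := by
    have h := (tendsto_const_nhds (x := δ₁ - 1) (f := atTop (α := ℝ))).add h2inv
    have h2 := h.const_mul c2
    rw [add_zero] at h2
    exact h2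
  have tendsInf : Tendsto (fun s : ℝ => s ^ (-(δ₁ + δ₁))) atTop (𝓝 0) :=
    tendsto_rpow_neg_atTop hsum
  have hR2 : Tendsto (fun s : ℝ => -(s ^ (-δ₁) * (f s * w))) atTop (𝓝 0) := by
    apply squeeze_zero_norm' (a := fun s => (C * |w|) * s ^ (-(δ₁ + δ₁)))
    · filter_upwards [eventually_ge_atTop (1:ℝ)] with s hs
      have hs0 : (0:ℝ) < s := lt_of_lt_of_le one_pos hs
      have hsp : (0:ℝ) < s ^ (-δ₁) := Real.rpow_pos_of_pos hs0 _
      have hb := hbinf s hs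
      calc ‖-(s ^ (-δ₁) * (f s * w))‖ = s ^ (-δ₁) * |f s| * |w| := by
            rw [norm_neg, Real.norm_eq_abs, abs_mul, abs_mul, abs_of_pos hsp]; ring
        _ ≤ s ^ (-δ₁) * (C * s ^ (-δ₁)) * |w| := by gcongr
        _ = (C * |w|) * s ^ (-(δ₁ + δ₁)) := by
            rw [show -(δ₁ + δ₁) = -δ₁ + -δ₁ by ring, Real.rpow_add hs0]; ring
    · simpa using tendsInf.const_mul (C * |w|)
  have hEq2 : (fun s : ℝ => c2 * ((δ₁ - 1) + 2 / (1 + s ^ 2)))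
      =ᶠ[atTop] fun s => -(s ^ (-δ₁) * (f s * w)) := by
    filter_upwards [eventually_ge_atTop (1:ℝ)] with s hs
    have hs0 : (0:ℝ) < s := lt_of_lt_of_le one_pos hs
    have hk := key s hs0
    rw [hc1z] at hk
    have hinv : s ^ (-δ₁) * s ^ δ₁ = 1 := by
      rw [← Real.rpow_add hs0]; simp
    have hφs : s ^ (-δ₁) * Phi δ₁ s = (δ₁ - 1) + 2 / (1 + s ^ 2) := by
      unfold Phi
      rw [← mul_assoc, hinv]
      ring
    rw [← hφs]
    linear_combination (-(s ^ (-δ₁))) * hk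
  have hc2z : c2 = 0 := by
    have hu : c2 * (δ₁ - 1) = 0 := tendsto_nhds_unique hL2 (hR2.congr' hEq2.symm)
    rcases mul_eq_zero.mp hu with h | h
    · exact h
    · exact absurd (sub_eq_zero.mp h) hδ₁_ne
  -- conclusion
  intro s hs
  have hk := key s hs
  rw [hc1z, hc2z] at hk
  simp only [zero_mul, sub_zero, zero_sub, neg_zero] at hk
  rcases mul_eq_zero.mp hk.symm with h | h
  · exact h
  · exact absurd h hwne
end
end
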